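/- Let b, s, k be positive integers and H a graph that is not b-edge-Ramsey for K_s. Then there exists a graph G such that (i) every colouring of the vertices of G with k colours contains a monochromatic copy of H, and (ii) G is not b-edge-Ramsey for K_s. -/

import Mathlib

/-- The edge colouring `c` contains a monochromatic copy of `K_s` in `G`. -/
def HasMonoKs {V : Type} (G : SimpleGraph V) (s : ℕ) {X : Type} (c : Sym2 V → X) : Prop :=
  ∃ T : Finset V, T.card = s ∧ (∀ u ∈ T, ∀ v ∈ T, u ≠ v → G.Adj u v) ∧
    ∃ col : X, ∀ u ∈ T, ∀ v ∈ T, u ≠ v → c s(u, v) = col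

namespace Stmt12

/-- A Ramsey system for the graph `H` restricted to positions `≥ t`, for `k` colours. -/
structure Sys {m b : ℕ} (H : SimpleGraph (Fin m)) (c₀ : Sym2 (Fin m) → Fin b)
    (t k : ℕ) : Type 1 where
  V : Type
  finV : Finite V
  neV : Nonempty V
  G : SimpleGraph V
  C : Set (Fin m → V)
  inj : ∀ φ ∈ C, ∀ u v : Fin m, t ≤ u.val → t ≤ v.val → φ u = φ v → u = v
  adj_iff : ∀ φ ∈ C, ∀ u v : Fin m, t ≤ u.val → t ≤ v.val →
      (G.Adj (φ u) (φ v) ↔ H.Adj u v)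
  ram : ∀ c : V → Fin k, ∃ φ ∈ C, ∃ col : Fin k, ∀ u : Fin m, t ≤ u.val → c (φ u) = col
  col : Sym2 V → Fin b
  col_coh : ∀ φ ∈ C, ∀ u v : Fin m, t ≤ u.val → t ≤ v.val → H.Adj u v →
      col s(φ u, φ v) = c₀ s(u, v)
  conf : ∀ T : Finset V, (∀ x ∈ T, ∀ y ∈ T, x ≠ y → G.Adj x y) → 2 ≤ T.card →
      ∃ φ ∈ C, ∃ K : Finset (Fin m), (∀ u ∈ K, t ≤ u.val) ∧
        (∀ u ∈ K, ∀ v ∈ K, u ≠ v → H.Adj u v) ∧ (∀ x, x ∈ T ↔ ∃ u ∈ K, φ u = x)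

variable {m b : ℕ} {H : SimpleGraph (Fin m)} {c₀ : Sym2 (Fin m) → Fin b} {t k : ℕ}

/-- Base system for `t ≥ m`: a single point. -/
noncomputable def base (H : SimpleGraph (Fin m)) (c₀ : Sym2 (Fin m) → Fin b)
    (hb : 1 ≤ b) (t k : ℕ) (hmt : m ≤ t) : Sys H c₀ t k where
  V := PUnit
  finV := inferInstance
  neV := ⟨.unit⟩
  G := ⊥
  C := {fun _ => .unit}
  inj := by
    intro φ _ u v hu _ _
    exact absurd (lt_of_lt_of_le u.isLt hmt) (not_lt.2 hu)
  adj_iff := by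
    intro φ _ u v hu _
    exact absurd (lt_of_lt_of_le u.isLt hmt) (not_lt.2 hu)
  ram := by
    intro c
    exact ⟨fun _ => .unit, rfl, c .unit, fun u _ => rfl⟩
  col := fun _ => ⟨0, hb⟩
  col_coh := by
    intro φ _ u v hu _ _
    exact absurd (lt_of_lt_of_le u.isLt hmt) (not_lt.2 hu)
  conf := by
    intro T _ hcard
    exfalso
    have h1 : T ⊆ {PUnit.unit} := fun x _ => Finset.mem_singleton.2 (Subsingleton.elim x PUnit.unit)
    have h2 : T.card ≤ 1 := by simpa using Finset.card_le_card h1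
    omega

/-- Base system for `k = 0` colours: `H` itself restricted to positions `≥ t`. -/
noncomputable def base0 (H : SimpleGraph (Fin m)) (c₀ : Sym2 (Fin m) → Fin b)
    (ht : t < m) : Sys H c₀ t 0 where
  V := Fin m
  finV := inferInstance
  neV := ⟨⟨t, ht⟩⟩
  G := { Adj := fun u v => H.Adj u v ∧ t ≤ u.val ∧ t ≤ v.val
         symm := ⟨by rintro u v ⟨h1, h2, h3⟩; exact ⟨h1.symm, h3, h2⟩⟩
         loopless := ⟨by rintro u ⟨h1, -, -⟩; exact H.loopless.irrefl u h1⟩ }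
  C := {id}
  inj := by
    rintro φ rfl u v _ _ h
    exact h
  adj_iff := by
    rintro φ rfl u v hu hv
    constructor
    · rintro ⟨h, -, -⟩; exact h
    · intro h; exact ⟨h, hu, hv⟩
  ram := by
    intro c
    exact (c ⟨t, ht⟩).elim0
  col := c₀
  col_coh := by
    rintro φ rfl u v _ _ _
    rfl
  conf := by
    intro T hadj hcard
    refine ⟨id, rfl, T, ?_, ?_, ?_⟩
    · intro u hu
      obtain ⟨v, hv, hvu⟩ := Finset.exists_mem_ne (s := T) (by omega) u
      exact (hadj v hv u hu hvu).2.2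
    · intro u hu v hv huv
      exact (hadj u hu v hv huv).1
    · intro x
      simp

section Step

variable {t k : ℕ}

/-- number of vertices of the template system -/
noncomputable def w (TK : Sys H c₀ t k) : ℕ := Nat.card TK.V

/-- number of skeleton components -/
noncomputable def R (k : ℕ) (TK : Sys H c₀ t k) : ℕ := (k+1) * (w TK - 1) + 1

/-- attachment tuples: an injection of the template into components, plus a choice
of a skeleton copy for every template vertex -/
noncomputable abbrev Tup (SK : Sys H c₀ (t+1) (k+1)) (TK : Sys H c₀ t k) : Type :=
  (TK.V ↪ Fin (R k TK)) × (TK.V → {ψ : Fin m → SK.V // ψ ∈ SK.C})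

/-- vertex set of the new system -/
noncomputable abbrev Vs (SK : Sys H c₀ (t+1) (k+1)) (TK : Sys H c₀ t k) : Type :=
  (Fin (R k TK) × SK.V) ⊕ (Tup SK TK × TK.V)

lemma VsFinite (SK : Sys H c₀ (t+1) (k+1)) (TK : Sys H c₀ t k) : Finite (Vs SK TK) := by
  haveI := SK.finV
  haveI := TK.finV
  haveI : Finite (TK.V ↪ Fin (R k TK)) :=
    Finite.of_injective (fun e => (e : TK.V → Fin (R k TK)))
      (fun e e' h => Function.Embedding.coe_injective h)
  haveI : Finite (Tup SK TK) := by unfold Tup; infer_instance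
  unfold Vs; infer_instance

/-- cross adjacency between an attached template vertex and skeleton vertices -/
def cross (ht : t < m) (SK : Sys H c₀ (t+1) (k+1)) (TK : Sys H c₀ t k)
    (τ : Tup SK TK) (v : TK.V) (i : Fin (R k TK)) (x : SK.V) : Prop :=
  i = τ.1 v ∧ ∃ q : Fin m, t < q.val ∧ H.Adj ⟨t, ht⟩ q ∧ x = (τ.2 v).1 q

/-- adjacency of the new system -/
def AdjV (ht : t < m) (SK : Sys H c₀ (t+1) (k+1)) (TK : Sys H c₀ t k) :
    Vs SK TK → Vs SK TK → Prop
  | .inl p, .inl p' => p.1 = p'.1 ∧ SK.G.Adj p.2 p'.2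
  | .inr q, .inr q' => q.1 = q'.1 ∧ TK.G.Adj q.2 q'.2
  | .inl p, .inr q => cross ht SK TK q.1 q.2 p.1 p.2
  | .inr q, .inl p => cross ht SK TK q.1 q.2 p.1 p.2

@[simp] lemma AdjV_inl_inl (ht : t < m) (SK : Sys H c₀ (t+1) (k+1)) (TK : Sys H c₀ t k)
    (p p' : Fin (R k TK) × SK.V) :
    AdjV ht SK TK (.inl p) (.inl p') ↔ p.1 = p'.1 ∧ SK.G.Adj p.2 p'.2 := Iff.rfl

@[simp] lemma AdjV_inr_inr (ht : t < m) (SK : Sys H c₀ (t+1) (k+1)) (TK : Sys H c₀ t k)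
    (q q' : Tup SK TK × TK.V) :
    AdjV ht SK TK (.inr q) (.inr q') ↔ q.1 = q'.1 ∧ TK.G.Adj q.2 q'.2 := Iff.rfl

@[simp] lemma AdjV_inl_inr (ht : t < m) (SK : Sys H c₀ (t+1) (k+1)) (TK : Sys H c₀ t k)
    (p : Fin (R k TK) × SK.V) (q : Tup SK TK × TK.V) :
    AdjV ht SK TK (.inl p) (.inr q) ↔ cross ht SK TK q.1 q.2 p.1 p.2 := Iff.rfl

@[simp] lemma AdjV_inr_inl (ht : t < m) (SK : Sys H c₀ (t+1) (k+1)) (TK : Sys H c₀ t k)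
    (p : Fin (R k TK) × SK.V) (q : Tup SK TK × TK.V) :
    AdjV ht SK TK (.inr q) (.inl p) ↔ cross ht SK TK q.1 q.2 p.1 p.2 := Iff.rfl

/-- the graph of the new system -/
def Gs (ht : t < m) (SK : Sys H c₀ (t+1) (k+1)) (TK : Sys H c₀ t k) :
    SimpleGraph (Vs SK TK) where
  Adj := AdjV ht SK TK
  symm := by
    refine ⟨?_⟩; rintro (p | q) (p' | q') h
    · exact ⟨h.1.symm, SK.G.symm.symm _ _ h.2⟩
    · exact h
    · exact h
    · exact ⟨h.1.symm, TK.G.symm.symm _ _ h.2⟩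
  loopless := by
    refine ⟨?_⟩; rintro (p | q) h
    · exact SK.G.loopless.irrefl _ h.2
    · exact TK.G.loopless.irrefl _ h.2

@[simp] lemma Gs_adj (ht : t < m) (SK : Sys H c₀ (t+1) (k+1)) (TK : Sys H c₀ t k)
    (x y : Vs SK TK) : (Gs ht SK TK).Adj x y ↔ AdjV ht SK TK x y := Iff.rfl

/-- copies placed inside an attached template -/
def dcopy (SK : Sys H c₀ (t+1) (k+1)) (TK : Sys H c₀ t k)
    (τ : Tup SK TK) (φ : Fin m → TK.V) : Fin m → Vs SK TK :=
  fun u => .inr (τ, φ u)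

/-- connector copies: position `t` goes to the attached template vertex, higher
positions go along the chosen skeleton copy -/
noncomputable def connector (SK : Sys H c₀ (t+1) (k+1)) (TK : Sys H c₀ t k)
    (τ : Tup SK TK) (v : TK.V) : Fin m → Vs SK TK :=
  fun u => if _ : t < u.val then .inl (τ.1 v, (τ.2 v).1 u) else .inr (τ, v)

/-- copies of the new system -/
def Cs (SK : Sys H c₀ (t+1) (k+1)) (TK : Sys H c₀ t k) : Set (Fin m → Vs SK TK) :=
  {ξ | (∃ τ, ∃ φ ∈ TK.C, ξ = dcopy SK TK τ φ) ∨ ∃ τ v, ξ = connector SK TK τ v}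

open Classical in
/-- colour of a cross pair -/
noncomputable def colg (ht : t < m) (SK : Sys H c₀ (t+1) (k+1)) (TK : Sys H c₀ t k)
    (τ : Tup SK TK) (v : TK.V) (x : SK.V) : Fin b :=
  if h : ∃ q : Fin m, t < q.val ∧ x = (τ.2 v).1 q then
    c₀ s(⟨t, ht⟩, Classical.choose h)
  else c₀ s(⟨t, ht⟩, ⟨t, ht⟩)

noncomputable def colf (ht : t < m) (SK : Sys H c₀ (t+1) (k+1)) (TK : Sys H c₀ t k) :
    Vs SK TK → Vs SK TK → Fin b
  | .inl p, .inl p' => SK.col s(p.2, p'.2)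
  | .inr q, .inr q' => TK.col s(q.2, q'.2)
  | .inl p, .inr q => colg ht SK TK q.1 q.2 p.2
  | .inr q, .inl p => colg ht SK TK q.1 q.2 p.2

@[simp] lemma colf_inl_inl (ht : t < m) (SK : Sys H c₀ (t+1) (k+1)) (TK : Sys H c₀ t k)
    (p p' : Fin (R k TK) × SK.V) :
    colf ht SK TK (.inl p) (.inl p') = SK.col s(p.2, p'.2) := rfl
@[simp] lemma colf_inr_inr (ht : t < m) (SK : Sys H c₀ (t+1) (k+1)) (TK : Sys H c₀ t k)
    (q q' : Tup SK TK × TK.V) :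
    colf ht SK TK (.inr q) (.inr q') = TK.col s(q.2, q'.2) := rfl
@[simp] lemma colf_inl_inr (ht : t < m) (SK : Sys H c₀ (t+1) (k+1)) (TK : Sys H c₀ t k)
    (p : Fin (R k TK) × SK.V) (q : Tup SK TK × TK.V) :
    colf ht SK TK (.inl p) (.inr q) = colg ht SK TK q.1 q.2 p.2 := rfl
@[simp] lemma colf_inr_inl (ht : t < m) (SK : Sys H c₀ (t+1) (k+1)) (TK : Sys H c₀ t k)
    (p : Fin (R k TK) × SK.V) (q : Tup SK TK × TK.V) :
    colf ht SK TK (.inr q) (.inl p) = colg ht SK TK q.1 q.2 p.2 := rfl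

noncomputable def cols (ht : t < m) (SK : Sys H c₀ (t+1) (k+1)) (TK : Sys H c₀ t k) :
    Sym2 (Vs SK TK) → Fin b :=
  Sym2.lift ⟨colf ht SK TK, by
    rintro (p | q) (p' | q')
    · simp only [colf_inl_inl]; rw [Sym2.eq_swap]
    · rfl
    · rfl
    · simp only [colf_inr_inr]; rw [Sym2.eq_swap]⟩

lemma step_inj (ht : t < m) (SK : Sys H c₀ (t+1) (k+1)) (TK : Sys H c₀ t k) :
    ∀ φ ∈ Cs SK TK, ∀ u v : Fin m, t ≤ u.val → t ≤ v.val →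
    φ u = φ v → u = v := by
  rintro φ (⟨τ, ψ, hψ, rfl⟩ | ⟨τ, v, rfl⟩) u v' hu hv' h
  · have h2 : ψ u = ψ v' := by simpa [dcopy] using h
    exact TK.inj ψ hψ u v' hu hv' h2
  · by_cases h1 : t < u.val <;> by_cases h2 : t < v'.val
    · simp only [connector, dif_pos h1, dif_pos h2] at h
      have h3 : (τ.2 v).1 u = (τ.2 v).1 v' := by simpa using h
      exact SK.inj (τ.2 v).1 (τ.2 v).2 u v' h1 h2 h3
    · simp only [connector, dif_pos h1, dif_neg h2] at h
      exact absurd h (by simp)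
    · simp only [connector, dif_neg h1, dif_pos h2] at h
      exact absurd h (by simp)
    · exact Fin.ext (by omega : u.val = v'.val)

lemma step_adj_iff (ht : t < m) (SK : Sys H c₀ (t+1) (k+1)) (TK : Sys H c₀ t k) :
    ∀ φ ∈ Cs SK TK, ∀ u v : Fin m, t ≤ u.val → t ≤ v.val →
    ((Gs ht SK TK).Adj (φ u) (φ v) ↔ H.Adj u v) := by
  rintro φ (⟨τ, ψ, hψ, rfl⟩ | ⟨τ, v, rfl⟩) u v' hu hv'
  · simp only [dcopy, Gs_adj, AdjV_inr_inr]
    rw [TK.adj_iff ψ hψ u v' hu hv']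
    simp
  · by_cases h1 : t < u.val <;> by_cases h2 : t < v'.val
    · simp only [connector, dif_pos h1, dif_pos h2, Gs_adj, AdjV_inl_inl]
      rw [SK.adj_iff (τ.2 v).1 (τ.2 v).2 u v' h1 h2]
      simp
    · have hv'' : v' = ⟨t, ht⟩ := Fin.ext (by omega : _ = t)
      subst hv''
      simp only [connector, dif_pos h1, dif_neg h2, Gs_adj, AdjV_inl_inr]
      constructor
      · rintro ⟨-, q, hq1, hq2, hq3⟩
        have : u = q := SK.inj (τ.2 v).1 (τ.2 v).2 u q h1 hq1 hq3
        subst this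
        exact hq2.symm
      · intro hA
        exact ⟨rfl, u, h1, hA.symm, rfl⟩
    · have hu'' : u = ⟨t, ht⟩ := Fin.ext (by omega : _ = t)
      subst hu''
      simp only [connector, dif_neg h1, dif_pos h2, Gs_adj, AdjV_inr_inl]
      constructor
      · rintro ⟨-, q, hq1, hq2, hq3⟩
        have : v' = q := SK.inj (τ.2 v).1 (τ.2 v).2 v' q h2 hq1 hq3
        subst this
        exact hq2
      · intro hA
        exact ⟨rfl, v', h2, hA, rfl⟩
    · have hu'' : u = ⟨t, ht⟩ := Fin.ext (by omega : _ = t)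
      have hv'' : v' = ⟨t, ht⟩ := by
        apply Fin.ext; show _ = t; omega
      subst hu''; subst hv''
      constructor
      · intro hA; exact absurd hA (Gs ht SK TK).irrefl
      · intro hA; exact absurd hA H.irrefl

lemma step_ram (ht : t < m) (SK : Sys H c₀ (t+1) (k+1)) (TK : Sys H c₀ t k) :
    ∀ c : Vs SK TK → Fin (k+1), ∃ φ ∈ Cs SK TK, ∃ col : Fin (k+1),
    ∀ u : Fin m, t ≤ u.val → c (φ u) = col := by
  classical
  intro c
  haveI := TK.finV
  haveI : Fintype TK.V := Fintype.ofFinite _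
  -- mono copies in every component
  have hcomp : ∀ i : Fin (R k TK), ∃ ψ, ψ ∈ SK.C ∧ ∃ α : Fin (k+1),
      ∀ u : Fin m, t+1 ≤ u.val → c (.inl (i, ψ u)) = α := by
    intro i
    obtain ⟨ψ, hψ, α, hα⟩ := SK.ram (fun x => c (.inl (i, x)))
    exact ⟨ψ, hψ, α, hα⟩
  choose ψf hψf αf hαf using hcomp
  -- pigeonhole
  have hpig : ∃ α : Fin (k+1), w TK - 1 <
      ((Finset.univ : Finset (Fin (R k TK))).filter fun i => αf i = α).card := by
    obtain ⟨α, -, hα⟩ := Finset.exists_lt_card_fiber_of_mul_lt_card_of_maps_to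
      (f := αf) (n := w TK - 1) (s := (Finset.univ : Finset (Fin (R k TK))))
      (t := (Finset.univ : Finset (Fin (k+1))))
      (fun i _ => Finset.mem_univ _) (by
        simp only [Finset.card_univ, Fintype.card_fin]; simp only [R]
        omega)
    exact ⟨α, hα⟩
  obtain ⟨α, hα⟩ := hpig
  obtain ⟨S, hSsub, hScard⟩ := Finset.exists_subset_card_eq (Nat.le_of_pred_lt hα)
  have hcardT : Fintype.card TK.V = w TK := (Nat.card_eq_fintype_card).symm
  let e1 : TK.V ≃ {x // x ∈ S} :=
    (Fintype.equivFinOfCardEq hcardT).trans (Finset.equivFinOfCardEq hScard).symm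
  let ι : TK.V ↪ Fin (R k TK) :=
    e1.toEmbedding.trans (Function.Embedding.subtype _)
  have hι : ∀ v : TK.V, αf (ι v) = α := by
    intro v
    have hmem : (ι v : Fin (R k TK)) ∈ S := (e1 v).2
    have := hSsub hmem
    simpa using (Finset.mem_filter.1 this).2
  let τ : Tup SK TK := ⟨ι, fun v => ⟨ψf (ι v), hψf (ι v)⟩⟩
  by_cases hex : ∃ v : TK.V, c (.inr (τ, v)) = α
  · obtain ⟨v, hv⟩ := hex
    refine ⟨connector SK TK τ v, Or.inr ⟨τ, v, rfl⟩, α, ?_⟩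
    intro u hu
    by_cases h1 : t < u.val
    · simp only [connector, dif_pos h1]
      have := hαf (ι v) u h1
      simpa [τ, hι v] using this
    · simp only [connector, dif_neg h1]
      exact hv
  · push_neg at hex
    have hch : ∀ v : TK.V, ∃ z : Fin k, α.succAbove z = c (.inr (τ, v)) :=
      fun v => Fin.exists_succAbove_eq (hex v)
    choose c' hc' using hch
    obtain ⟨φ, hφ, β, hβ⟩ := TK.ram c'
    refine ⟨dcopy SK TK τ φ, Or.inl ⟨τ, φ, hφ, rfl⟩, α.succAbove β, ?_⟩
    intro u hu
    have h3 : c' (φ u) = β := hβ u hu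
    rw [dcopy]
    rw [← hc' (φ u), h3]

lemma step_col_coh (ht : t < m) (SK : Sys H c₀ (t+1) (k+1)) (TK : Sys H c₀ t k) :
    ∀ φ ∈ Cs SK TK, ∀ u v : Fin m, t ≤ u.val → t ≤ v.val →
    H.Adj u v → cols ht SK TK s(φ u, φ v) = c₀ s(u, v) := by
  rintro φ (⟨τ, ψ, hψ, rfl⟩ | ⟨τ, v, rfl⟩) u v' hu hv' hadj
  · simp only [dcopy, cols, Sym2.lift_mk, colf_inr_inr]
    exact TK.col_coh ψ hψ u v' hu hv' hadj
  · by_cases h1 : t < u.val <;> by_cases h2 : t < v'.val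
    · simp only [connector, dif_pos h1, dif_pos h2, cols, Sym2.lift_mk, colf_inl_inl]
      exact SK.col_coh (τ.2 v).1 (τ.2 v).2 u v' h1 h2 hadj
    · have hv'' : v' = ⟨t, ht⟩ := Fin.ext (by omega : _ = t)
      subst hv''
      simp only [connector, dif_pos h1, dif_neg h2, cols, Sym2.lift_mk, colf_inl_inr]
      have hex : ∃ q : Fin m, t < q.val ∧ (τ.2 v).1 u = (τ.2 v).1 q := ⟨u, h1, rfl⟩
      rw [colg, dif_pos hex]
      have hspec := Classical.choose_spec hex
      have hcq : Classical.choose hex = u :=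
        SK.inj (τ.2 v).1 (τ.2 v).2 _ u hspec.1 h1 hspec.2.symm
      rw [hcq, Sym2.eq_swap]
    · have hu'' : u = ⟨t, ht⟩ := Fin.ext (by omega : _ = t)
      subst hu''
      simp only [connector, dif_neg h1, dif_pos h2, cols, Sym2.lift_mk, colf_inr_inl]
      have hex : ∃ q : Fin m, t < q.val ∧ (τ.2 v).1 v' = (τ.2 v).1 q := ⟨v', h2, rfl⟩
      rw [colg, dif_pos hex]
      have hspec := Classical.choose_spec hex
      have hcq : Classical.choose hex = v' :=
        SK.inj (τ.2 v).1 (τ.2 v).2 _ v' hspec.1 h2 hspec.2.symm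
      rw [hcq]
    · have hu'' : u = ⟨t, ht⟩ := Fin.ext (by omega : _ = t)
      have hv'' : v' = ⟨t, ht⟩ := by
        apply Fin.ext; show _ = t; omega
      subst hu''; subst hv''
      exact absurd hadj H.irrefl

lemma step_conf (ht : t < m) (SK : Sys H c₀ (t+1) (k+1)) (TK : Sys H c₀ t k) :
    ∀ T : Finset (Vs SK TK),
    (∀ x ∈ T, ∀ y ∈ T, x ≠ y → (Gs ht SK TK).Adj x y) → 2 ≤ T.card →
      ∃ φ ∈ Cs SK TK, ∃ K : Finset (Fin m), (∀ u ∈ K, t ≤ u.val) ∧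
        (∀ u ∈ K, ∀ v ∈ K, u ≠ v → H.Adj u v) ∧ (∀ x, x ∈ T ↔ ∃ u ∈ K, φ u = x) := by
  classical
  intro T hadj hcard
  haveI := TK.finV
  haveI := SK.finV
  haveI : Fintype TK.V := Fintype.ofFinite _
  by_cases hr : ∃ p : Tup SK TK × TK.V, Sum.inr p ∈ T
  · obtain ⟨⟨τ, v⟩, hv⟩ := hr
    by_cases hl : ∃ p : Fin (R k TK) × SK.V, Sum.inl p ∈ T
    · -- mixed case: a single attached vertex plus skeleton vertices
      obtain ⟨⟨i, x⟩, hx⟩ := hl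
      have hcr : ∀ z ∈ T, z ≠ Sum.inr (τ, v) → ∃ q : Fin m, t < q.val ∧
          H.Adj ⟨t, ht⟩ q ∧ z = Sum.inl (τ.1 v, (τ.2 v).1 q) := by
        intro z hz hzne
        cases z with
        | inr p =>
          obtain ⟨τ', v'⟩ := p
          exfalso
          have h1 : AdjV ht SK TK (Sum.inr (τ', v')) (Sum.inr (τ, v)) := hadj _ hz _ hv hzne
          obtain ⟨hττ, hvv⟩ := h1
          subst hττ
          have h2 : AdjV ht SK TK (Sum.inl (i, x)) (Sum.inr (τ', v)) :=
            hadj _ hx _ hv (by simp)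
          have h3 : AdjV ht SK TK (Sum.inl (i, x)) (Sum.inr (τ', v')) :=
            hadj _ hx _ hz (by simp)
          have h4 : τ'.1 v = τ'.1 v' := h2.1.symm.trans h3.1
          have h5 : v = v' := τ'.1.injective h4
          subst h5
          exact TK.G.loopless.irrefl _ hvv
        | inl p =>
          obtain ⟨j, y⟩ := p
          have h1 : AdjV ht SK TK (Sum.inl (j, y)) (Sum.inr (τ, v)) := hadj _ hz _ hv hzne
          obtain ⟨hj, q, hq1, hq2, hq3⟩ := h1
          have hj' : j = τ.1 v := hj
          have hq3' : y = (τ.2 v).1 q := hq3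
          exact ⟨q, hq1, hq2, by rw [hj', hq3']⟩
      have hcr' : ∀ z : Vs SK TK, ∃ q : Fin m, z ∈ T.erase (Sum.inr (τ, v)) →
          t < q.val ∧ H.Adj ⟨t, ht⟩ q ∧ z = Sum.inl (τ.1 v, (τ.2 v).1 q) := by
        intro z
        by_cases hz : z ∈ T.erase (Sum.inr (τ, v))
        · obtain ⟨q, h1, h2, h3⟩ := hcr z (Finset.mem_of_mem_erase hz)
            (Finset.ne_of_mem_erase hz)
          exact ⟨q, fun _ => ⟨h1, h2, h3⟩⟩
        · exact ⟨⟨t, ht⟩, fun h => absurd h hz⟩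
      choose qtot hq using hcr'
      refine ⟨connector SK TK τ v, Or.inr ⟨τ, v, rfl⟩,
        insert ⟨t, ht⟩ ((T.erase (Sum.inr (τ, v))).image qtot), ?_, ?_, ?_⟩
      · intro u hu
        rcases Finset.mem_insert.1 hu with rfl | hu
        · exact le_refl t
        · obtain ⟨z, hz, rfl⟩ := Finset.mem_image.1 hu
          exact le_of_lt (hq z hz).1
      · intro u hu u' hu' hne
        rcases Finset.mem_insert.1 hu with rfl | hu
        · rcases Finset.mem_insert.1 hu' with rfl | hu'
          · exact absurd rfl hne
          · obtain ⟨z, hz, rfl⟩ := Finset.mem_image.1 hu'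
            exact (hq z hz).2.1
        · obtain ⟨z, hz, rfl⟩ := Finset.mem_image.1 hu
          rcases Finset.mem_insert.1 hu' with rfl | hu'
          · exact H.symm.symm _ _ (hq z hz).2.1
          · obtain ⟨z', hz', rfl⟩ := Finset.mem_image.1 hu'
            have hzz : z ≠ z' := fun h => hne (by rw [h])
            have hA := hadj z (Finset.mem_of_mem_erase hz) z'
              (Finset.mem_of_mem_erase hz') hzz
            rw [(hq z hz).2.2, (hq z' hz').2.2] at hA
            have hA2 : SK.G.Adj ((τ.2 v).1 (qtot z)) ((τ.2 v).1 (qtot z')) := hA.2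
            exact (SK.adj_iff (τ.2 v).1 (τ.2 v).2 _ _ (hq z hz).1 (hq z' hz').1).1 hA2
      · intro y
        constructor
        · intro hy
          by_cases hye : y = Sum.inr (τ, v)
          · refine ⟨⟨t, ht⟩, Finset.mem_insert_self _ _, ?_⟩
            simp only [connector, dif_neg (lt_irrefl t)]
            exact hye.symm
          · have hyz : y ∈ T.erase (Sum.inr (τ, v)) := Finset.mem_erase.2 ⟨hye, hy⟩
            refine ⟨qtot y, Finset.mem_insert_of_mem (Finset.mem_image_of_mem _ hyz), ?_⟩
            simp only [connector, dif_pos (hq y hyz).1]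
            exact ((hq y hyz).2.2).symm
        · rintro ⟨u, hu, rfl⟩
          rcases Finset.mem_insert.1 hu with rfl | hu
          · simpa only [connector, dif_neg (lt_irrefl t)] using hv
          · obtain ⟨z, hz, rfl⟩ := Finset.mem_image.1 hu
            simp only [connector, dif_pos (hq z hz).1]
            rw [← (hq z hz).2.2]
            exact Finset.mem_of_mem_erase hz
    · -- all the vertices sit inside a single attached template
      push_neg at hl
      obtain ⟨g, hg⟩ : ∃ g : Vs SK TK → TK.V, ∀ z ∈ T, z = Sum.inr (τ, g z) := by
        refine ⟨fun z => match z with | Sum.inr p => p.2 | Sum.inl _ => v, ?_⟩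
        intro z hz
        cases z with
        | inl p => exact absurd hz (hl p)
        | inr p =>
          obtain ⟨τ', v'⟩ := p
          by_cases hz2 : (Sum.inr (τ', v') : Vs SK TK) = Sum.inr (τ, v)
          · have h6 : τ' = τ ∧ v' = v := by simpa using hz2
            show (Sum.inr (τ', v') : Vs SK TK) = Sum.inr (τ, v')
            rw [h6.1]
          · have h1 : AdjV ht SK TK (Sum.inr (τ', v')) (Sum.inr (τ, v)) :=
              hadj _ hz _ hv hz2
            have hττ : τ' = τ := h1.1
            show (Sum.inr (τ', v') : Vs SK TK) = Sum.inr (τ, v')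
            rw [hττ]
      have hginj : Set.InjOn g T := by
        intro z hz z' hz' hgz
        rw [hg z hz, hg z' hz', hgz]
      have hYcard : (T.image g).card = T.card := Finset.card_image_of_injOn hginj
      have hYadj : ∀ y ∈ T.image g, ∀ y' ∈ T.image g, y ≠ y' → TK.G.Adj y y' := by
        intro y hy y' hy' hne
        obtain ⟨z, hz, rfl⟩ := Finset.mem_image.1 hy
        obtain ⟨z', hz', rfl⟩ := Finset.mem_image.1 hy'
        have hzz : z ≠ z' := fun h => hne (by rw [h])
        have hA := hadj z hz z' hz' hzz
        rw [hg z hz, hg z' hz'] at hA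
        exact hA.2
      obtain ⟨φ, hφ, K, hK1, hK2, hK3⟩ := TK.conf (T.image g) hYadj (by omega)
      refine ⟨dcopy SK TK τ φ, Or.inl ⟨τ, φ, hφ, rfl⟩, K, hK1, hK2, ?_⟩
      intro y
      constructor
      · intro hy
        obtain ⟨u, hu, hux⟩ := (hK3 (g y)).1 (Finset.mem_image_of_mem g hy)
        refine ⟨u, hu, ?_⟩
        simp only [dcopy]
        rw [hux]
        exact (hg y hy).symm
      · rintro ⟨u, hu, rfl⟩
        have hmem : φ u ∈ T.image g := (hK3 (φ u)).2 ⟨u, hu, rfl⟩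
        obtain ⟨z, hz, hgz⟩ := Finset.mem_image.1 hmem
        have hz2 := hg z hz
        rw [hgz] at hz2
        simp only [dcopy]
        rw [← hz2]
        exact hz
  · -- all the vertices sit inside a single skeleton component
    push_neg at hr
    obtain ⟨a0, ha0⟩ := Finset.card_pos.1 (by omega : 0 < T.card)
    rcases a0 with p | p
    swap
    · exact absurd ha0 (hr p)
    obtain ⟨i0, x0⟩ := p
    obtain ⟨gS, hgS⟩ : ∃ g : Vs SK TK → SK.V, ∀ z ∈ T, z = Sum.inl (i0, g z) := by
      refine ⟨fun z => match z with | Sum.inl p => p.2 | Sum.inr _ => x0, ?_⟩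
      intro z hz
      cases z with
      | inr p => exact absurd hz (hr p)
      | inl p =>
        obtain ⟨j, y⟩ := p
        by_cases hza : (Sum.inl (j, y) : Vs SK TK) = Sum.inl (i0, x0)
        · have h6 : j = i0 ∧ y = x0 := by simpa using hza
          show (Sum.inl (j, y) : Vs SK TK) = Sum.inl (i0, y)
          rw [h6.1]
        · have hA : AdjV ht SK TK (Sum.inl (j, y)) (Sum.inl (i0, x0)) :=
            hadj _ hz _ ha0 hza
          have hji : j = i0 := hA.1
          show (Sum.inl (j, y) : Vs SK TK) = Sum.inl (i0, y)
          rw [hji]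
    have hginj : Set.InjOn gS T := by
      intro z hz z' hz' hgz
      rw [hgS z hz, hgS z' hz', hgz]
    have hXcard : (T.image gS).card = T.card := Finset.card_image_of_injOn hginj
    have hXadj : ∀ y ∈ T.image gS, ∀ y' ∈ T.image gS, y ≠ y' → SK.G.Adj y y' := by
      intro y hy y' hy' hne
      obtain ⟨z, hz, rfl⟩ := Finset.mem_image.1 hy
      obtain ⟨z', hz', rfl⟩ := Finset.mem_image.1 hy'
      have hzz : z ≠ z' := fun h => hne (by rw [h])
      have hA := hadj z hz z' hz' hzz
      rw [hgS z hz, hgS z' hz'] at hA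
      exact hA.2
    obtain ⟨ψs, hψs, K, hK1, hK2, hK3⟩ := SK.conf (T.image gS) hXadj (by omega)
    obtain ⟨v0⟩ := TK.neV
    have hwle : Fintype.card TK.V ≤ Fintype.card (Fin (R k TK)) := by
      rw [Fintype.card_fin]
      have h1 : Fintype.card TK.V = w TK := (Nat.card_eq_fintype_card).symm
      have h2 := Nat.le_mul_of_pos_left (w TK - 1) (show 0 < k + 1 by omega)
      rw [h1, R]
      omega
    obtain ⟨ι0⟩ := Function.Embedding.nonempty_of_card_le hwle
    obtain ⟨τ, hι, hψτ⟩ : ∃ τ : Tup SK TK, τ.1 v0 = i0 ∧ ∀ v', (τ.2 v').1 = ψs := by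
      refine ⟨⟨ι0.trans (Equiv.swap (ι0 v0) i0).toEmbedding,
        fun _ => ⟨ψs, hψs⟩⟩, ?_, fun _ => rfl⟩
      simp [Function.Embedding.trans_apply, Equiv.coe_toEmbedding, Equiv.swap_apply_left]
    refine ⟨connector SK TK τ v0, Or.inr ⟨τ, v0, rfl⟩, K,
      fun u hu => by have := hK1 u hu; omega, hK2, ?_⟩
    intro y
    constructor
    · intro hy
      obtain ⟨u, hu, hux⟩ := (hK3 (gS y)).1 (Finset.mem_image_of_mem gS hy)
      refine ⟨u, hu, ?_⟩
      have hupos : t < u.val := by have := hK1 u hu; omega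
      simp only [connector, dif_pos hupos, hψτ, hι]
      rw [hux]
      exact (hgS y hy).symm
    · rintro ⟨u, hu, rfl⟩
      have hupos : t < u.val := by have := hK1 u hu; omega
      have hmem : ψs u ∈ T.image gS := (hK3 (ψs u)).2 ⟨u, hu, rfl⟩
      obtain ⟨z, hz, hgz⟩ := Finset.mem_image.1 hmem
      have hz2 := hgS z hz
      rw [hgz] at hz2
      simp only [connector, dif_pos hupos, hψτ, hι]
      rw [← hz2]
      exact hz

/-- the amalgamation step -/
noncomputable def step (ht : t < m) (SK : Sys H c₀ (t+1) (k+1)) (TK : Sys H c₀ t k) :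
    Sys H c₀ t (k+1) where
  V := Vs SK TK
  finV := VsFinite SK TK
  neV := ⟨.inl (⟨0, Nat.succ_pos _⟩, SK.neV.some)⟩
  G := Gs ht SK TK
  C := Cs SK TK
  inj := step_inj ht SK TK
  adj_iff := step_adj_iff ht SK TK
  ram := step_ram ht SK TK
  col := cols ht SK TK
  col_coh := step_col_coh ht SK TK
  conf := step_conf ht SK TK

end Step

/-- the full recursive construction -/
noncomputable def build (H : SimpleGraph (Fin m)) (c₀ : Sym2 (Fin m) → Fin b)
    (hb : 1 ≤ b) : (t k : ℕ) → Sys H c₀ t k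
  | t, k =>
    if hmt : m ≤ t then base H c₀ hb t k hmt
    else
      match k with
      | 0 => base0 H c₀ (by omega)
      | (k+1) => step (by omega) (build H c₀ hb (t+1) (k+1)) (build H c₀ hb t k)
  termination_by t k => (m - t, k)
  decreasing_by
  · exact Prod.Lex.left _ _ (by omega)
  · exact Prod.Lex.right _ (by omega)

end Stmt12

theorem stmt_12 (b s k : ℕ) (hb : 1 ≤ b) (hs : 1 ≤ s) (hk : 1 ≤ k)
    {m : ℕ} (H : SimpleGraph (Fin m))
    (hH : ∃ c : Sym2 (Fin m) → Fin b, ¬ HasMonoKs H s c) :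
    ∃ (n : ℕ) (G : SimpleGraph (Fin n)),
      -- (i) G is k-vertex-Ramsey for H
      (∀ c : Fin n → Fin k, ∃ f : Fin m → Fin n, Function.Injective f ∧
        (∀ u v : Fin m, H.Adj u v → G.Adj (f u) (f v)) ∧
        ∃ col : Fin k, ∀ u : Fin m, c (f u) = col) ∧
      -- (ii) G is not b-edge-Ramsey for K_s
      (∃ c : Sym2 (Fin n) → Fin b, ¬ HasMonoKs G s c) := by
  classical
  obtain ⟨c₀, hc₀⟩ := hH
  rcases Nat.eq_zero_or_pos m with hm | hm
  · -- `H` has no vertices at all; the empty graph works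
    subst hm
    refine ⟨0, ⊥, ?_, ?_⟩
    · intro c
      exact ⟨fun u => u, fun a b h => h, fun u v _ => u.elim0, ⟨0, hk⟩, fun u => u.elim0⟩
    · refine ⟨fun _ => ⟨0, hb⟩, ?_⟩
      rintro ⟨T, hTcard, -, -⟩
      have hT : T = ∅ := Finset.eq_empty_of_forall_notMem (fun x => x.elim0)
      rw [hT] at hTcard
      simp at hTcard
      omega
  · by_cases hs1 : s = 1
    · -- impossible: `H` itself would contain a monochromatic `K_1`
      exfalso
      apply hc₀
      subst hs1
      refine ⟨{⟨0, hm⟩}, Finset.card_singleton _, ?_, ⟨0, hb⟩, ?_⟩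
      · intro u hu v hv huv
        rw [Finset.mem_singleton] at hu hv
        exact absurd (hu.trans hv.symm) huv
      · intro u hu v hv huv
        rw [Finset.mem_singleton] at hu hv
        exact absurd (hu.trans hv.symm) huv
    · have hs2 : 2 ≤ s := by omega
      set S := Stmt12.build H c₀ hb 0 k with hS
      haveI := S.finV
      haveI : Fintype S.V := Fintype.ofFinite _
      let e : S.V ≃ Fin (Fintype.card S.V) := Fintype.equivFin _
      refine ⟨Fintype.card S.V,
        ⟨fun a b' => S.G.Adj (e.symm a) (e.symm b'), ⟨fun a b' h => S.G.symm.symm _ _ h⟩,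
          ⟨fun a h => S.G.loopless.irrefl _ h⟩⟩, ?_, ?_⟩
      · -- vertex-Ramsey property
        intro c
        obtain ⟨φ, hφ, col, hcol⟩ := S.ram (fun x => c (e x))
        refine ⟨fun u => e (φ u), ?_, ?_, col, fun u => hcol u (Nat.zero_le _)⟩
        · intro u v huv
          exact S.inj φ hφ u v (Nat.zero_le _) (Nat.zero_le _) (e.injective huv)
        · intro u v huv
          show S.G.Adj (e.symm (e (φ u))) (e.symm (e (φ v)))
          rw [Equiv.symm_apply_apply, Equiv.symm_apply_apply]
          exact (S.adj_iff φ hφ u v (Nat.zero_le _) (Nat.zero_le _)).2 huv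
      · -- no monochromatic `K_s`
        refine ⟨fun p => S.col (p.map e.symm), ?_⟩
        rintro ⟨T, hTcard, hTadj, col, hcol⟩
        apply hc₀
        have hT'card : (T.image e.symm).card = s := by
          rw [Finset.card_image_of_injective _ e.symm.injective, hTcard]
        have hT'adj : ∀ x ∈ T.image e.symm, ∀ y ∈ T.image e.symm, x ≠ y → S.G.Adj x y := by
          intro x hx y hy hxy
          obtain ⟨a, ha, rfl⟩ := Finset.mem_image.1 hx
          obtain ⟨a', ha', rfl⟩ := Finset.mem_image.1 hy
          have haa : a ≠ a' := fun h => hxy (by rw [h])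
          exact hTadj a ha a' ha' haa
        obtain ⟨φ, hφ, K, hK1, hK2, hK3⟩ := S.conf (T.image e.symm) hT'adj (by omega)
        have hTK : T.image e.symm = K.image φ := by
          ext x
          rw [hK3 x, Finset.mem_image]
        have hKinj : Set.InjOn φ ↑K :=
          fun u _ v _ h => S.inj φ hφ u v (Nat.zero_le _) (Nat.zero_le _) h
        have hKcard : K.card = s := by
          have h4 := Finset.card_image_of_injOn hKinj
          rw [← hTK, hT'card] at h4
          omega
        refine ⟨K, hKcard, hK2, col, ?_⟩
        intro u hu v hv huv
        have hadjH : H.Adj u v := hK2 u hu v hv huv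
        have h5 : S.col s(φ u, φ v) = c₀ s(u, v) :=
          S.col_coh φ hφ u v (Nat.zero_le _) (Nat.zero_le _) hadjH
        have hmu : φ u ∈ T.image e.symm := (hK3 _).2 ⟨u, hu, rfl⟩
        have hmv : φ v ∈ T.image e.symm := (hK3 _).2 ⟨v, hv, rfl⟩
        obtain ⟨a, ha, haa⟩ := Finset.mem_image.1 hmu
        obtain ⟨a', ha', haa'⟩ := Finset.mem_image.1 hmv
        have hane : a ≠ a' := by
          intro h
          apply huv
          apply S.inj φ hφ u v (Nat.zero_le _) (Nat.zero_le _)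
          rw [← haa, ← haa', h]
        have h6 := hcol a ha a' ha' hane
        have h7 : (Sym2.map e.symm) s(a, a') = s(φ u, φ v) := by
          rw [Sym2.map_pair_eq, haa, haa']
        rw [← h5, ← h7]
        exact h6
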